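/- Cartan decomposition, existence: let R be a discrete valuation ring with uniformiser ϖ and fraction field K. For every g ∈ GL_n(K) there exist k₁, k₂ ∈ GL_n(R) and an antitone function f : Fin n → ℤ (i.e. f₁ ≥ f₂ ≥ … ≥ fₙ) such that k₁·g·k₂ equals the diagonal matrix diag(ϖ^{f 0}, …, ϖ^{f (n-1)}). -/

import Mathlib

open Matrix

section Blocks

variable {R : Type*} [CommRing R] {n : ℕ}

/-- Block matrix `A ⊕ p` with `A` in the top-left `n×n` corner and `p` at bottom right. -/
def dblock (A : Matrix (Fin n) (Fin n) R) (p : R) : Matrix (Fin (n+1)) (Fin (n+1)) R :=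
  Matrix.of (Fin.lastCases (Fin.snoc 0 p) (fun i => Fin.snoc (A i) 0))

@[simp] lemma dblock_last_last (A : Matrix (Fin n) (Fin n) R) (p : R) :
    dblock A p (Fin.last n) (Fin.last n) = p := by
  simp [dblock]

@[simp] lemma dblock_last_castSucc (A : Matrix (Fin n) (Fin n) R) (p : R) (j : Fin n) :
    dblock A p (Fin.last n) (j.castSucc) = 0 := by
  simp [dblock]

@[simp] lemma dblock_castSucc_last (A : Matrix (Fin n) (Fin n) R) (p : R) (i : Fin n) :
    dblock A p (i.castSucc) (Fin.last n) = 0 := by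
  simp [dblock]

@[simp] lemma dblock_castSucc_castSucc (A : Matrix (Fin n) (Fin n) R) (p : R) (i j : Fin n) :
    dblock A p (i.castSucc) (j.castSucc) = A i j := by
  simp [dblock]

lemma dblock_mul_dblock (A B : Matrix (Fin n) (Fin n) R) (p q : R) :
    dblock A p * dblock B q = dblock (A * B) (p * q) := by
  ext i j
  rw [mul_apply, Fin.sum_univ_castSucc]
  induction i using Fin.lastCases with
  | last => induction j using Fin.lastCases with
    | last => simp
    | cast j => simp [mul_apply]
  | cast i => induction j using Fin.lastCases with
    | last => simp
    | cast j => simp [mul_apply]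

lemma dblock_one : (dblock 1 1 : Matrix (Fin (n+1)) (Fin (n+1)) R) = 1 := by
  ext i j
  induction i using Fin.lastCases with
  | last => induction j using Fin.lastCases with
    | last => simp
    | cast j => simp [Matrix.one_apply, Fin.ne_of_gt (Fin.castSucc_lt_last j), (Fin.castSucc_lt_last j).ne']
  | cast i => induction j using Fin.lastCases with
    | last => simp [Matrix.one_apply, Fin.ne_of_lt (Fin.castSucc_lt_last i)]
    | cast j => simp [Matrix.one_apply, Fin.castSucc_inj]

/-- `dblock` on units. -/
def dblockUnit (B : (Matrix (Fin n) (Fin n) R)ˣ) (u : Rˣ) : (Matrix (Fin (n+1)) (Fin (n+1)) R)ˣ where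
  val := dblock B u
  inv := dblock ↑B⁻¹ ↑u⁻¹
  val_inv := by rw [dblock_mul_dblock]; simp [dblock_one]
  inv_val := by rw [dblock_mul_dblock]; simp [dblock_one]

lemma dblock_diagonal (d : Fin n → R) (p : R) :
    dblock (Matrix.diagonal d) p = Matrix.diagonal (Fin.snoc d p) := by
  ext i j
  induction i using Fin.lastCases with
  | last =>
    induction j using Fin.lastCases with
    | last => simp
    | cast j => simp [Matrix.diagonal_apply_ne _ (Fin.castSucc_lt_last j).ne']
  | cast i =>
    induction j using Fin.lastCases with
    | last => simp [Matrix.diagonal_apply_ne _ (Fin.castSucc_lt_last i).ne]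
    | cast j =>
      rcases eq_or_ne i j with rfl | h
      · simp
      · simp [Matrix.diagonal_apply_ne _ h,
          Matrix.diagonal_apply_ne _ (show i.castSucc ≠ j.castSucc by simpa [Fin.castSucc_inj] using h)]

lemma eq_dblock (M : Matrix (Fin (n+1)) (Fin (n+1)) R)
    (h1 : ∀ i : Fin n, M i.castSucc (Fin.last n) = 0)
    (h2 : ∀ j : Fin n, M (Fin.last n) j.castSucc = 0) :
    M = dblock (M.submatrix Fin.castSucc Fin.castSucc) (M (Fin.last n) (Fin.last n)) := by
  ext i j
  induction i using Fin.lastCases with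
  | last => induction j using Fin.lastCases with
    | last => simp
    | cast j => simp [h2]
  | cast i => induction j using Fin.lastCases with
    | last => simp [h1]
    | cast j => simp

lemma det_dblock (A : Matrix (Fin n) (Fin n) R) (p : R) :
    (dblock A p).det = p * A.det := by
  rw [Matrix.det_succ_row _ (Fin.last n)]
  rw [Finset.sum_eq_single (Fin.last n)]
  · have : (Fin.last n).succAbove = Fin.castSucc := Fin.succAbove_last
    simp only [dblock_last_last, this]
    have hsub : (dblock A p).submatrix Fin.castSucc Fin.castSucc = A := by
      ext i j; simp
    rw [hsub]
    have : ((-1 : R)) ^ ((Fin.last n : ℕ) + (Fin.last n : ℕ)) = 1 :=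
      Even.neg_one_pow ⟨n, by simp [Fin.last]⟩
    rw [this, one_mul]
  · intro j _ hj
    induction j using Fin.lastCases with
    | last => exact absurd rfl hj
    | cast j => simp
  · simp

end Blocks

section Elim
variable {R : Type*} [CommRing R] {n : ℕ}

def colM (c : Fin (n+1) → R) : Matrix (Fin (n+1)) (Fin (n+1)) R :=
  Matrix.of fun i j => if j = Fin.last n then c i else 0

def rowM (d : Fin (n+1) → R) : Matrix (Fin (n+1)) (Fin (n+1)) R :=
  Matrix.of fun i j => if i = Fin.last n then d j else 0

lemma colM_mul (c : Fin (n+1) → R) (X : Matrix (Fin (n+1)) (Fin (n+1)) R) (i j) :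
    (colM c * X) i j = c i * X (Fin.last n) j := by
  rw [mul_apply, Finset.sum_eq_single (Fin.last n)] <;> simp (config := {contextual := true}) [colM]

lemma mul_rowM (d : Fin (n+1) → R) (X : Matrix (Fin (n+1)) (Fin (n+1)) R) (i j) :
    (X * rowM d) i j = X i (Fin.last n) * d j := by
  rw [mul_apply, Finset.sum_eq_single (Fin.last n)] <;> simp (config := {contextual := true}) [rowM]

lemma colM_mul_colM (c c' : Fin (n+1) → R) (h : c' (Fin.last n) = 0) :
    colM c * colM c' = 0 := by
  ext i j; rw [colM_mul]; simp [colM, h]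

lemma rowM_mul_rowM (d d' : Fin (n+1) → R) (h : d (Fin.last n) = 0) :
    rowM d * rowM d' = 0 := by
  ext i j; rw [mul_rowM]; simp [rowM, h]

lemma colM_add (c c' : Fin (n+1) → R) : colM c + colM c' = colM (c + c') := by
  ext i j; by_cases h : j = Fin.last n <;> simp [colM, h]

lemma rowM_add (d d' : Fin (n+1) → R) : rowM d + rowM d' = rowM (d + d') := by
  ext i j; by_cases h : i = Fin.last n <;> simp [rowM, h]

lemma colM_zero : (colM 0 : Matrix (Fin (n+1)) (Fin (n+1)) R) = 0 := by
  ext i j; simp [colM]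

lemma rowM_zero : (rowM 0 : Matrix (Fin (n+1)) (Fin (n+1)) R) = 0 := by
  ext i j; simp [rowM]

/-- The unit `1 + colM c` when `c (last) = 0`. -/
def colUnit (c : Fin (n+1) → R) (h : c (Fin.last n) = 0) : (Matrix (Fin (n+1)) (Fin (n+1)) R)ˣ where
  val := 1 + colM c
  inv := 1 + colM (-c)
  val_inv := by
    simp only [add_mul, mul_add, one_mul, mul_one, colM_mul_colM c (-c) (by simp [h]),
      add_zero, add_assoc, colM_add]
    simp [colM_zero]
  inv_val := by
    simp only [add_mul, mul_add, one_mul, mul_one, colM_mul_colM (-c) c h,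
      add_zero, add_assoc, colM_add]
    simp [colM_zero]

def rowUnit (d : Fin (n+1) → R) (h : d (Fin.last n) = 0) : (Matrix (Fin (n+1)) (Fin (n+1)) R)ˣ where
  val := 1 + rowM d
  inv := 1 + rowM (-d)
  val_inv := by
    simp only [add_mul, mul_add, one_mul, mul_one, rowM_mul_rowM d (-d) h,
      add_zero, add_assoc, rowM_add]
    simp [rowM_zero]
  inv_val := by
    simp only [add_mul, mul_add, one_mul, mul_one, rowM_mul_rowM (-d) d (by simp [h]),
      add_zero, add_assoc, rowM_add]
    simp [rowM_zero]

/-- Entries of the eliminated matrix. -/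
lemma elim_apply (c d : Fin (n+1) → R) (A : Matrix (Fin (n+1)) (Fin (n+1)) R) (i j) :
    ((1 + colM c) * A * (1 + rowM d)) i j =
      A i j + c i * A (Fin.last n) j + (A i (Fin.last n) + c i * A (Fin.last n) (Fin.last n)) * d j := by
  simp only [add_mul, mul_add, one_mul, mul_one, Matrix.add_apply, colM_mul, mul_rowM]

/-- Permutation unit from a swap (or any involutive equiv). -/
def permUnit (σ : Equiv.Perm (Fin (n+1))) (hσ : σ.trans σ = Equiv.refl _) :
    (Matrix (Fin (n+1)) (Fin (n+1)) R)ˣ where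
  val := σ.toPEquiv.toMatrix
  inv := σ.toPEquiv.toMatrix
  val_inv := by rw [← PEquiv.toMatrix_trans, ← Equiv.toPEquiv_trans, hσ]; simp
  inv_val := by rw [← PEquiv.toMatrix_trans, ← Equiv.toPEquiv_trans, hσ]; simp

lemma dvd_mul_matrix {m : ℕ} {x : R} {A : Matrix (Fin m) (Fin m) R}
    (h : ∀ i j, x ∣ A i j) (B C : Matrix (Fin m) (Fin m) R) (i j : Fin m) :
    x ∣ (B * A * C) i j := by
  rw [mul_apply]
  refine Finset.dvd_sum fun k _ => ?_
  refine Dvd.dvd.mul_right ?_ _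
  rw [mul_apply]
  exact Finset.dvd_sum fun l _ => (h l k).mul_left _

end Elim

section SNF
variable {R : Type*} [CommRing R] [IsDomain R] [IsDiscreteValuationRing R]

lemma snf_exists (ϖ : R) (hϖ : Irreducible ϖ) :
    ∀ (n : ℕ) (A : Matrix (Fin n) (Fin n) R), A.det ≠ 0 →
      ∃ (B C : (Matrix (Fin n) (Fin n) R)ˣ) (f : Fin n → ℕ), Antitone f ∧
        (B : Matrix (Fin n) (Fin n) R) * A * C = Matrix.diagonal fun i => ϖ ^ f i := by
  intro n
  induction n with
  | zero =>
    intro A _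
    exact ⟨1, 1, finZeroElim, fun i => i.elim0, by ext i j; exact i.elim0⟩
  | succ n IH =>
    intro A hA
    -- find the minimal ϖ-adic valuation among the entries
    have hA0 : ∃ i j, A i j ≠ 0 := by
      by_contra hcon
      push_neg at hcon
      exact hA (by rw [show A = 0 by ext i j; exact hcon i j]; exact Matrix.det_zero)
    have hP : ∃ m : ℕ, ∃ i j, ¬ ϖ ^ (m + 1) ∣ A i j := by
      obtain ⟨i, j, hij⟩ := hA0
      obtain ⟨k, u, hu⟩ := IsDiscreteValuationRing.eq_unit_mul_pow_irreducible hij hϖ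
      refine ⟨k, i, j, ?_⟩
      rw [hu, Units.dvd_mul_left, pow_dvd_pow_iff hϖ.ne_zero hϖ.not_isUnit]
      omega
    classical
    set v := Nat.find hP with hv
    obtain ⟨i₀, j₀, hpiv⟩ := Nat.find_spec hP
    have hdvd : ∀ i j, ϖ ^ v ∣ A i j := by
      intro i j
      rcases Nat.eq_zero_or_pos v with h0 | h0
      · rw [h0, pow_zero]; exact one_dvd _
      · have hmin := Nat.find_min hP (m := v - 1) (by omega)
        push_neg at hmin
        have h2 := hmin i j
        rwa [Nat.sub_add_cancel h0] at h2
    -- the pivot is a unit times ϖ ^ v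
    obtain ⟨w₀, hw₀⟩ := hdvd i₀ j₀
    have hw₀u : IsUnit w₀ := by
      by_contra hcon
      apply hpiv
      have hπ : ϖ ∣ w₀ := by
        have hmem : w₀ ∈ IsLocalRing.maximalIdeal R := hcon
        rwa [(IsDiscreteValuationRing.irreducible_iff_uniformizer ϖ).mp hϖ,
          Ideal.mem_span_singleton] at hmem
      obtain ⟨t, ht⟩ := hπ
      exact ⟨t, by rw [hw₀, ht]; ring⟩
    lift w₀ to Rˣ using hw₀u with w
    -- move the pivot to the bottom-right corner
    set σ := Equiv.swap i₀ (Fin.last n) with hσdef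
    set τ := Equiv.swap j₀ (Fin.last n) with hτdef
    set A₁ := A.submatrix σ τ with hA₁def
    have hperm : σ.toPEquiv.toMatrix * A * τ.toPEquiv.toMatrix = A₁ := by
      rw [PEquiv.toMatrix_toPEquiv_mul, PEquiv.mul_toMatrix_toPEquiv,
        Matrix.submatrix_submatrix, hτdef, Equiv.symm_swap]
      rfl
    have hA₁dvd : ∀ i j, ϖ ^ v ∣ A₁ i j := fun i j => hdvd _ _
    have hp : A₁ (Fin.last n) (Fin.last n) = ϖ ^ v * ↑w := by
      rw [hA₁def, Matrix.submatrix_apply, hσdef, hτdef,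
        Equiv.swap_apply_right, Equiv.swap_apply_right]
      exact hw₀
    have hdetA₁ : A₁.det ≠ 0 := by
      have hdet : A₁.det = (σ.toPEquiv.toMatrix : Matrix (Fin (n+1)) (Fin (n+1)) R).det * A.det *
          (τ.toPEquiv.toMatrix : Matrix (Fin (n+1)) (Fin (n+1)) R).det := by
        rw [← hperm, Matrix.det_mul, Matrix.det_mul]
      have hu1 : IsUnit (σ.toPEquiv.toMatrix : Matrix (Fin (n+1)) (Fin (n+1)) R).det :=
        (Matrix.isUnit_iff_isUnit_det _).mp ⟨permUnit σ (Equiv.swap_swap _ _), rfl⟩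
      have hu2 : IsUnit (τ.toPEquiv.toMatrix : Matrix (Fin (n+1)) (Fin (n+1)) R).det :=
        (Matrix.isUnit_iff_isUnit_det _).mp ⟨permUnit τ (Equiv.swap_swap _ _), rfl⟩
      rw [hdet]
      exact mul_ne_zero (mul_ne_zero hu1.ne_zero hA) hu2.ne_zero
    -- the pivot divides everything of valuation ≥ v
    have hpdvd : ∀ x : R, ϖ ^ v ∣ x → A₁ (Fin.last n) (Fin.last n) ∣ x := by
      rintro x ⟨y, hy⟩
      exact ⟨↑w⁻¹ * y, by rw [hy, hp, mul_assoc, ← mul_assoc (w : R), Units.mul_inv, one_mul]⟩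
    choose q hq using fun i : Fin n => hpdvd _ (hA₁dvd i.castSucc (Fin.last n))
    choose r hr using fun j : Fin n => hpdvd _ (hA₁dvd (Fin.last n) j.castSucc)
    set c : Fin (n+1) → R := Fin.snoc (fun i => -(q i)) 0 with hcdef
    set d : Fin (n+1) → R := Fin.snoc (fun j => -(r j)) 0 with hddef
    have hclast : c (Fin.last n) = 0 := by rw [hcdef]; simp
    have hdlast : d (Fin.last n) = 0 := by rw [hddef]; simp
    set L := colUnit c hclast with hLdef
    set U := rowUnit d hdlast with hUdef
    set M := (1 + colM c) * A₁ * (1 + rowM d) with hM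
    have hcol : ∀ i : Fin n, M i.castSucc (Fin.last n) = 0 := by
      intro i
      rw [hM, elim_apply, hdlast, mul_zero, add_zero, hcdef, Fin.snoc_castSucc, hq i]
      ring
    have hrow : ∀ j : Fin n, M (Fin.last n) j.castSucc = 0 := by
      intro j
      rw [hM, elim_apply, hclast, hddef, Fin.snoc_castSucc, hr j]
      ring
    have hMll : M (Fin.last n) (Fin.last n) = A₁ (Fin.last n) (Fin.last n) := by
      rw [hM, elim_apply, hclast, hdlast]
      ring
    set A' := M.submatrix Fin.castSucc Fin.castSucc with hA'def
    have hMd : M = dblock A' (A₁ (Fin.last n) (Fin.last n)) := by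
      have h0 := eq_dblock M hcol hrow
      rwa [hMll] at h0
    have hA'dvd : ∀ i j, ϖ ^ v ∣ A' i j := by
      intro i j
      have := dvd_mul_matrix hA₁dvd (1 + colM c) (1 + rowM d) i.castSucc j.castSucc
      rwa [← hM] at this
    have hdetM : M.det ≠ 0 := by
      have hL : IsUnit ((1 + colM c) : Matrix (Fin (n+1)) (Fin (n+1)) R).det :=
        (Matrix.isUnit_iff_isUnit_det _).mp ⟨L, rfl⟩
      have hU : IsUnit ((1 + rowM d) : Matrix (Fin (n+1)) (Fin (n+1)) R).det :=
        (Matrix.isUnit_iff_isUnit_det _).mp ⟨U, rfl⟩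
      rw [hM, Matrix.det_mul, Matrix.det_mul]
      exact mul_ne_zero (mul_ne_zero hL.ne_zero hdetA₁) hU.ne_zero
    have hdetA' : A'.det ≠ 0 := by
      intro h0
      exact hdetM (by rw [hMd, det_dblock, h0, mul_zero])
    obtain ⟨B', C', f', hf'anti, hBC⟩ := IH A' hdetA'
    have hle : ∀ i, v ≤ f' i := by
      intro i
      have h1 : ϖ ^ v ∣ ((B' : Matrix (Fin n) (Fin n) R) * A' * C') i i :=
        dvd_mul_matrix hA'dvd _ _ i i
      rw [hBC, Matrix.diagonal_apply_eq] at h1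
      exact (pow_dvd_pow_iff hϖ.ne_zero hϖ.not_isUnit).mp h1
    refine ⟨dblockUnit 1 w⁻¹ * dblockUnit B' 1 * L * permUnit σ (Equiv.swap_swap _ _),
      permUnit τ (Equiv.swap_swap _ _) * U * dblockUnit C' 1, Fin.snoc f' v, ?_, ?_⟩
    · -- antitone
      intro a b hab
      rcases Fin.eq_castSucc_or_eq_last b with ⟨b', rfl⟩ | rfl
      · rcases Fin.eq_castSucc_or_eq_last a with ⟨a', rfl⟩ | rfl
        · rw [Fin.snoc_castSucc, Fin.snoc_castSucc]
          exact hf'anti (Fin.castSucc_le_castSucc_iff.mp hab)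
        · exact absurd (le_antisymm hab (Fin.le_last _)) (Fin.castSucc_lt_last b').ne'
      · rcases Fin.eq_castSucc_or_eq_last a with ⟨a', rfl⟩ | rfl
        · rw [Fin.snoc_castSucc, Fin.snoc_last]
          exact hle a'
        · exact le_rfl
    · -- the matrix identity
      have hLval : (L : Matrix (Fin (n+1)) (Fin (n+1)) R) = 1 + colM c := rfl
      have hUval : (U : Matrix (Fin (n+1)) (Fin (n+1)) R) = 1 + rowM d := rfl
      have hPσ : ∀ h, ((permUnit σ h : (Matrix (Fin (n+1)) (Fin (n+1)) R)ˣ) :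
          Matrix (Fin (n+1)) (Fin (n+1)) R) = σ.toPEquiv.toMatrix := fun _ => rfl
      have hPτ : ∀ h, ((permUnit τ h : (Matrix (Fin (n+1)) (Fin (n+1)) R)ˣ) :
          Matrix (Fin (n+1)) (Fin (n+1)) R) = τ.toPEquiv.toMatrix := fun _ => rfl
      have hB1 : ((dblockUnit B' 1 : (Matrix (Fin (n+1)) (Fin (n+1)) R)ˣ) :
          Matrix (Fin (n+1)) (Fin (n+1)) R) = dblock (B' : Matrix (Fin n) (Fin n) R) 1 := by
        show dblock _ ((1 : Rˣ) : R) = _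
        rw [Units.val_one]
      have hC1 : ((dblockUnit C' 1 : (Matrix (Fin (n+1)) (Fin (n+1)) R)ˣ) :
          Matrix (Fin (n+1)) (Fin (n+1)) R) = dblock (C' : Matrix (Fin n) (Fin n) R) 1 := by
        show dblock _ ((1 : Rˣ) : R) = _
        rw [Units.val_one]
      have hW : ((dblockUnit 1 w⁻¹ : (Matrix (Fin (n+1)) (Fin (n+1)) R)ˣ) :
          Matrix (Fin (n+1)) (Fin (n+1)) R) = dblock 1 ((w⁻¹ : Rˣ) : R) := by
        show dblock ((1 : (Matrix (Fin n) (Fin n) R)ˣ) : Matrix (Fin n) (Fin n) R) _ = _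
        rw [Units.val_one]
      have key : dblock 1 ((w⁻¹ : Rˣ) : R) * dblock (B' : Matrix (Fin n) (Fin n) R) 1 *
          ((1 + colM c) * (σ.toPEquiv.toMatrix * A * τ.toPEquiv.toMatrix) * (1 + rowM d)) *
          dblock (C' : Matrix (Fin n) (Fin n) R) 1 =
          Matrix.diagonal fun i => ϖ ^ ((Fin.snoc f' v : Fin (n+1) → ℕ) i) := by
        rw [hperm, ← hM, hMd]
        simp only [dblock_mul_dblock]
        rw [one_mul, mul_one, mul_one, hBC, hp]
        rw [show ((w⁻¹ : Rˣ) : R) * (ϖ ^ v * ↑w) = ϖ ^ v by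
          rw [mul_comm (ϖ ^ v), ← mul_assoc, Units.inv_mul, one_mul]]
        rw [dblock_diagonal]
        have hfun : (Fin.snoc (fun i => ϖ ^ f' i) (ϖ ^ v) : Fin (n+1) → R) =
            fun i => ϖ ^ ((Fin.snoc f' v : Fin (n+1) → ℕ) i) := by
          funext i
          rcases Fin.eq_castSucc_or_eq_last i with ⟨i', rfl⟩ | rfl <;> simp
        rw [hfun]
      simp only [Units.val_mul, hLval, hUval, hB1, hC1, hW, hPσ, hPτ]
      show _ * A * _ = _
      simpa only [mul_assoc] using key

end SNF


/-- The diagonal matrix over `K` with `i`-th diagonal entry `ϖ ^ f i`, for `f : Fin n → ℤ`. -/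
noncomputable def cartanDiag {R : Type*} [CommRing R] {K : Type*} [Field K] [Algebra R K]
    (ϖ : R) {n : ℕ} (f : Fin n → ℤ) : Matrix (Fin n) (Fin n) K :=
  Matrix.diagonal fun i => (algebraMap R K ϖ) ^ (f i)

/-- **Cartan decomposition, existence.** Let `R` be a discrete valuation ring with
uniformiser `ϖ` and fraction field `K`. For every `g ∈ GLₙ(K)` there exist `k₁, k₂ ∈ GLₙ(R)`
and an antitone `f : Fin n → ℤ` with `k₁ * g * k₂ = diag (ϖ ^ f 0, …, ϖ ^ f (n - 1))`. -/
theorem cartan_decomposition_exists {R : Type*} [CommRing R] [IsDomain R]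
    [IsDiscreteValuationRing R] {K : Type*} [Field K] [Algebra R K] [IsFractionRing R K]
    (ϖ : R) (hϖ : Irreducible ϖ) {n : ℕ} (g : GL (Fin n) K) :
    ∃ (k₁ k₂ : GL (Fin n) R) (f : Fin n → ℤ), Antitone f ∧
      (((Matrix.GeneralLinearGroup.map (n := Fin n) (algebraMap R K)) k₁ * g *
        (Matrix.GeneralLinearGroup.map (n := Fin n) (algebraMap R K)) k₂ :
          GL (Fin n) K) : Matrix (Fin n) (Fin n) K) = cartanDiag ϖ f := by
  classical
  set φ := algebraMap R K with hφ
  have hinj : Function.Injective φ := IsFractionRing.injective R K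
  have hϖK : φ ϖ ≠ 0 := fun h => hϖ.ne_zero (hinj (by rw [h, map_zero]))
  -- clear denominators entrywise
  have hentry : ∀ x : K, ∃ (m : ℕ) (r : R), φ ϖ ^ m * x = φ r := by
    intro x
    obtain ⟨a, b, hb, hx⟩ := IsFractionRing.div_surjective (A := R) x
    have hb0 : b ≠ 0 := nonZeroDivisors.ne_zero hb
    obtain ⟨m, u, hu⟩ := IsDiscreteValuationRing.eq_unit_mul_pow_irreducible hb0 hϖ
    refine ⟨m, a * ↑u⁻¹, ?_⟩
    have hbK : φ b ≠ 0 := fun h => hb0 (hinj (by rw [h, map_zero]))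
    have hune : φ ↑u ≠ 0 := by
      intro h
      apply hbK
      rw [hu, _root_.map_mul, h, zero_mul]
    have h1 : x * φ b = φ a := by rw [← hx]; exact div_mul_cancel₀ _ hbK
    apply mul_right_cancel₀ hune
    calc φ ϖ ^ m * x * φ ↑u = x * φ b := by rw [hu, _root_.map_mul, map_pow]; ring
      _ = φ a := h1
      _ = φ (a * ↑u⁻¹) * φ ↑u := by rw [← _root_.map_mul, Units.inv_mul_cancel_right]
  choose m rr hmr using fun ij : Fin n × Fin n => hentry ((g : Matrix (Fin n) (Fin n) K) ij.1 ij.2)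
  set N := Finset.univ.sup m with hN
  have hmle : ∀ ij, m ij ≤ N := fun ij => Finset.le_sup (Finset.mem_univ ij)
  set A : Matrix (Fin n) (Fin n) R :=
    Matrix.of (fun i j => ϖ ^ (N - m (i, j)) * rr (i, j)) with hAdef
  have hmap : A.map φ = φ ϖ ^ N • (g : Matrix (Fin n) (Fin n) K) := by
    ext i j
    rw [Matrix.map_apply, Matrix.smul_apply, smul_eq_mul]
    show φ (ϖ ^ (N - m (i, j)) * rr (i, j)) = _
    conv_rhs => rw [show N = (N - m (i, j)) + m (i, j) from (Nat.sub_add_cancel (hmle _)).symm]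
    rw [pow_add, mul_assoc, hmr (i, j), _root_.map_mul, map_pow]
  have hdetg : (g : Matrix (Fin n) (Fin n) K).det ≠ 0 :=
    ((Matrix.isUnit_iff_isUnit_det _).mp g.isUnit).ne_zero
  have hdetA : A.det ≠ 0 := by
    intro h0
    have h2 : (A.map φ).det = 0 := by
      have := RingHom.map_det φ A
      rw [h0, map_zero] at this
      exact this.symm
    rw [hmap, Matrix.det_smul] at h2
    exact mul_ne_zero (pow_ne_zero _ (pow_ne_zero _ hϖK)) hdetg h2
  obtain ⟨B, C, f, hfanti, hBC⟩ := snf_exists ϖ hϖ n A hdetA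
  refine ⟨B, C, fun i => (f i : ℤ) - N, ?_, ?_⟩
  · intro a b hab
    have := hfanti hab
    simp only
    omega
  · have hK : ((B : Matrix (Fin n) (Fin n) R).map φ) * (A.map φ) *
        ((C : Matrix (Fin n) (Fin n) R).map φ) = Matrix.diagonal fun i => φ ϖ ^ f i := by
      have h3 := congrArg (fun X : Matrix (Fin n) (Fin n) R => X.map φ) hBC
      simp only [Matrix.map_mul] at h3
      rw [h3, Matrix.diagonal_map (map_zero φ)]
      simp only [map_pow]
    rw [hmap, Matrix.mul_smul, Matrix.smul_mul] at hK
    have h9 : ((B : Matrix (Fin n) (Fin n) R).map φ) * (g : Matrix (Fin n) (Fin n) K) *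
        ((C : Matrix (Fin n) (Fin n) R).map φ) =
        (φ ϖ ^ N)⁻¹ • Matrix.diagonal fun i => φ ϖ ^ f i := by
      rw [← hK, inv_smul_smul₀ (pow_ne_zero _ hϖK)]
    have hcoeB : ((Matrix.GeneralLinearGroup.map (n := Fin n) φ B : GL (Fin n) K) :
        Matrix (Fin n) (Fin n) K) = (B : Matrix (Fin n) (Fin n) R).map φ := rfl
    have hcoeC : ((Matrix.GeneralLinearGroup.map (n := Fin n) φ C : GL (Fin n) K) :
        Matrix (Fin n) (Fin n) K) = (C : Matrix (Fin n) (Fin n) R).map φ := rfl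
    rw [Units.val_mul, Units.val_mul, hcoeB, hcoeC, h9]
    ext i j
    rcases eq_or_ne i j with rfl | hij
    · rw [Matrix.smul_apply, Matrix.diagonal_apply_eq, cartanDiag, Matrix.diagonal_apply_eq,
        zpow_sub₀ hϖK, zpow_natCast, zpow_natCast, smul_eq_mul, inv_mul_eq_div]
    · rw [Matrix.smul_apply, Matrix.diagonal_apply_ne _ hij, cartanDiag,
        Matrix.diagonal_apply_ne _ hij, smul_zero]
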